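/- Let M^{-1} = R_Dᵀ S̃^{-1} R_D be the BDDC preconditioner and Ŝ = Rᵀ S R the assembled Schur complement, where R, R_D satisfy R_Dᵀ R = I on the continuous space Ŵ (i.e., the averaging operator E_D = R R_Dᵀ restricted appropriately is a projection onto Ŵ with E_D R = R). If |E_D u|²_{S̃} ≤ C |u|²_{S̃} for all u in the partially assembled space W̃, then the eigenvalues of the preconditioned operator M^{-1}Ŝ satisfy 1 ≤ λ ≤ C, hence cond(M^{-1}Ŝ) ≤ C. -/

import Mathlib

open Matrix

/-- Abstract BDDC condition number theorem: if the averaging operator E_D = R R_Dᵀ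
satisfies |E_D u|²_{S̃} ≤ C |u|²_{S̃} on the partially assembled space, then all
eigenvalues of the preconditioned operator M⁻¹Ŝ = (R_Dᵀ S̃⁻¹ R_D)(Rᵀ S̃ R) lie
in [1, C]. -/
theorem bddc_eigenvalue_bounds (N M : ℕ)
    (St : Matrix (Fin N) (Fin N) ℝ) (hSt : St.PosDef)
    (R RD : Matrix (Fin N) (Fin M) ℝ) (hRD : RDᵀ * R = 1)
    (C : ℝ)
    (hE : ∀ u : Fin N → ℝ,
      ((R * RDᵀ) *ᵥ u) ⬝ᵥ St *ᵥ ((R * RDᵀ) *ᵥ u) ≤ C * (u ⬝ᵥ St *ᵥ u)) :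
    ∀ μ : ℝ,
      Module.End.HasEigenvalue
        (Matrix.toLin' ((RDᵀ * St⁻¹ * RD) * (Rᵀ * St * R))) μ →
      1 ≤ μ ∧ μ ≤ C := by
  intro μ hμ
  obtain ⟨x, hx⟩ := hμ.exists_hasEigenvector
  have hx0 : x ≠ 0 := hx.2
  have hTx : (RDᵀ * St⁻¹ * RD * (Rᵀ * St * R)) *ᵥ x = μ • x := by
    have := Module.End.mem_eigenspace_iff.mp hx.1
    simpa [Matrix.toLin'_apply, Matrix.mul_assoc] using this
  have hStinv : St * St⁻¹ = 1 :=
    Matrix.mul_nonsing_inv St (isUnit_iff_ne_zero.mpr hSt.det_pos.ne')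
  -- notation
  set v : Fin N → ℝ := R *ᵥ x with hv
  set Sx : Fin M → ℝ := Rᵀ *ᵥ (St *ᵥ v) with hSx
  set u : Fin N → ℝ := St⁻¹ *ᵥ (RD *ᵥ Sx) with hu
  -- eigen relation
  have h1 : RDᵀ *ᵥ u = μ • x := by
    rw [hu, hSx, hv] at *
    rw [← hTx]
    simp [← Matrix.mulVec_mulVec, Matrix.mul_assoc]
  have h2 : St *ᵥ u = RD *ᵥ Sx := by
    rw [hu, Matrix.mulVec_mulVec, hStinv, Matrix.one_mulVec]
  -- transpose-dot helper
  have hdot : ∀ (k l : ℕ) (A : Matrix (Fin k) (Fin l) ℝ) (a : Fin k → ℝ) (b : Fin l → ℝ),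
      a ⬝ᵥ (A *ᵥ b) = (Aᵀ *ᵥ a) ⬝ᵥ b := by
    intro k l A a b
    simp [Matrix.dotProduct_mulVec, Matrix.mulVec_transpose]
  set s : ℝ := x ⬝ᵥ Sx with hs
  have hRDv : RDᵀ *ᵥ v = x := by
    rw [hv, Matrix.mulVec_mulVec, hRD, Matrix.one_mulVec]
  have hsv : v ⬝ᵥ (St *ᵥ v) = s := by
    rw [hs, hSx, hdot _ _ Rᵀ, Matrix.transpose_transpose]
  have hSymm : Stᵀ = St := hSt.isHermitian
  have haa : u ⬝ᵥ (St *ᵥ u) = μ * s := by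
    rw [h2, hdot, h1, smul_dotProduct, hs, smul_eq_mul]
  have hab : u ⬝ᵥ (St *ᵥ v) = s := by
    rw [hdot, hSymm, h2, dotProduct_comm, hdot, hRDv, hs]
  have hba : v ⬝ᵥ (St *ᵥ u) = s := by
    rw [h2, hdot, hRDv, hs]
  -- positivity of s
  have hvne : v ≠ 0 := by
    intro h
    apply hx0
    rw [← hRDv, h, Matrix.mulVec_zero]
  have hspos : 0 < s := by
    have := hSt.dotProduct_mulVec_pos hvne
    simpa [hsv] using this
  -- lower bound via (u - v)ᵀ St (u - v) ≥ 0
  have hq : 0 ≤ (u - v) ⬝ᵥ (St *ᵥ (u - v)) := by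
    have := hSt.posSemidef.dotProduct_mulVec_nonneg (u - v)
    simpa using this
  have hexp : (u - v) ⬝ᵥ (St *ᵥ (u - v)) = (μ - 1) * s := by
    rw [Matrix.mulVec_sub, sub_dotProduct, dotProduct_sub,
      dotProduct_sub, haa, hab, hba, hsv]
    ring
  have hmu1 : 1 ≤ μ := by nlinarith [hq, hexp, hspos]
  refine ⟨hmu1, ?_⟩
  -- upper bound via hE
  have hEu := hE u
  have hEDu : (R * RDᵀ) *ᵥ u = μ • v := by
    rw [← Matrix.mulVec_mulVec, h1, Matrix.mulVec_smul, hv]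
  rw [hEDu, haa, smul_dotProduct, Matrix.mulVec_smul,
    dotProduct_smul, hsv, smul_eq_mul, smul_eq_mul] at hEu
  nlinarith [hEu, hspos, hmu1]
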